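/- Let t ≥ 2 and let m₀, m₁, …, m_{t−2} be positive integers with m = m₀+m₁+⋯+m_{t−2}. Then the number of permitted sequences of parameters (m, t) in which the value i appears exactly m_i times for each 0 ≤ i ≤ t−2 equals Π_{i=0}^{t−3} binom(m_i + m_{i+1} − 1, m_i − 1). -/

import Mathlib

open List
namespace PermittedAux


/-- Insert a run of `cs`-many `(k+1)`'s after each occurrence of `k`. -/
def ins (k : ℕ) : List ℕ → List ℕ → List ℕ
  | [], _ => []
  | a :: rest, cs =>
    if a = k then a :: (List.replicate cs.headI (k + 1) ++ ins k rest cs.tail)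
    else a :: ins k rest cs

/-- Extract run lengths of `(k+1)`'s following each occurrence of `k`. -/
def ext (k : ℕ) : List ℕ → List ℕ
  | [] => []
  | a :: rest =>
    if a = k then (rest.takeWhile (· == k + 1)).length :: ext k (rest.dropWhile (· == k + 1))
    else ext k rest
  termination_by l => l.length
  decreasing_by
  · simp only [List.length_cons]
    exact Nat.lt_succ_of_le (List.Sublist.length_le (List.dropWhile_sublist _))
  · simp

/-- Erase all `(k+1)`'s. -/
def era (k : ℕ) (γ : List ℕ) : List ℕ := γ.filter (fun a => a != k + 1)

theorem head?_ins (k : ℕ) (γ cs : List ℕ) : (ins k γ cs).head? = γ.head? := by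
  cases γ with
  | nil => rfl
  | cons a rest => rw [ins]; split <;> rfl

theorem length_ins (k : ℕ) (γ cs : List ℕ) (h : cs.length = γ.count k) :
    (ins k γ cs).length = γ.length + cs.sum := by
  induction γ generalizing cs with
  | nil => simp at h; simp [ins, h]
  | cons a rest ih =>
    by_cases ha : a = k
    · subst ha
      rw [count_cons_self] at h
      cases cs with
      | nil => simp at h
      | cons c cs' =>
        simp only [length_cons] at h
        rw [ins, if_pos rfl]
        simp [ih cs' (by omega)]
        omega
    · rw [count_cons_of_ne ha] at h
      rw [ins, if_neg ha]
      simp [ih cs h]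
      omega

theorem count_ins_of_ne (k i : ℕ) (hi : i ≠ k + 1) (γ cs : List ℕ) (h : cs.length = γ.count k) :
    (ins k γ cs).count i = γ.count i := by
  induction γ generalizing cs with
  | nil => simp [ins]
  | cons a rest ih =>
    by_cases ha : a = k
    · subst ha
      rw [count_cons_self] at h
      cases cs with
      | nil => simp at h
      | cons c cs' =>
        simp only [length_cons] at h
        rw [ins, if_pos rfl]
        simp [count_append, count_replicate, ih cs' (by omega),
          count_cons, Ne.symm hi]
    · rw [count_cons_of_ne ha] at h
      rw [ins, if_neg ha]
      simp [count_cons, ih cs h]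

theorem count_ins_top (k : ℕ) (γ cs : List ℕ) (h : cs.length = γ.count k)
    (hb : ∀ x ∈ γ, x ≤ k) : (ins k γ cs).count (k + 1) = cs.sum := by
  induction γ generalizing cs with
  | nil => simp at h; simp [ins, h]
  | cons a rest ih =>
    have ha' : a ≠ k + 1 := by have := hb a (mem_cons_self (a := a) (l := rest)); omega
    have hb' : ∀ x ∈ rest, x ≤ k := fun x hx => hb x (mem_cons_of_mem _ hx)
    by_cases ha : a = k
    · subst ha
      rw [count_cons_self] at h
      cases cs with
      | nil => simp at h
      | cons c cs' =>
        simp only [length_cons] at h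
        rw [ins, if_pos rfl]
        simp [count_append, count_replicate, ih cs' (by omega) hb', count_cons, ha']
    · rw [count_cons_of_ne ha] at h
      rw [ins, if_neg ha]
      simp [count_cons, ih cs h hb', ha']

theorem mem_ins (k : ℕ) (γ cs : List ℕ) (x : ℕ) (hx : x ∈ ins k γ cs) :
    x ∈ γ ∨ x = k + 1 := by
  induction γ generalizing cs with
  | nil => simp [ins] at hx
  | cons a rest ih =>
    rw [ins] at hx
    split at hx
    · rcases mem_cons.mp hx with h | h
      · exact Or.inl (h ▸ mem_cons_self (a := a) (l := rest))
      · rcases mem_append.mp h with h | h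
        · exact Or.inr (eq_of_mem_replicate h)
        · rcases ih _ h with h | h
          · exact Or.inl (mem_cons_of_mem _ h)
          · exact Or.inr h
    · rcases mem_cons.mp hx with h | h
      · exact Or.inl (h ▸ mem_cons_self (a := a) (l := rest))
      · rcases ih _ h with h | h
        · exact Or.inl (mem_cons_of_mem _ h)
        · exact Or.inr h

theorem chain'_cons_replicate (k c a : ℕ) (hak : k ≤ a) (l₂ : List ℕ)
    (hl : Chain' (fun x y => y ≤ x + 1) l₂) (hhead : ∀ y ∈ l₂.head?, y ≤ k + 1) :
    Chain' (fun x y => y ≤ x + 1) (a :: (List.replicate c (k + 1) ++ l₂)) := by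
  induction c generalizing a with
  | zero =>
    simp only [replicate_zero, nil_append]
    exact isChain_cons.mpr ⟨fun y hy => (hhead y hy).trans (by omega), hl⟩
  | succ c ihc =>
    rw [replicate_succ, cons_append]
    exact isChain_cons_cons.mpr ⟨by omega, ihc (k + 1) (by omega)⟩

theorem chain'_ins (k : ℕ) (γ cs : List ℕ) (h : cs.length = γ.count k)
    (hb : ∀ x ∈ γ, x ≤ k) (hc : Chain' (fun a b => b ≤ a + 1) γ) :
    Chain' (fun a b => b ≤ a + 1) (ins k γ cs) := by
  induction γ generalizing cs with
  | nil => simp [ins]; exact isChain_nil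
  | cons a rest ih =>
    obtain ⟨hrel, hc'⟩ := isChain_cons.mp hc
    have hb' : ∀ x ∈ rest, x ≤ k := fun x hx => hb x (mem_cons_of_mem _ hx)
    by_cases ha : a = k
    · subst ha
      rw [count_cons_self] at h
      rw [ins, if_pos rfl]
      refine chain'_cons_replicate a cs.headI a le_rfl _ (ih cs.tail (by simp [h]) hb' hc') ?_
      intro y hy
      rw [head?_ins] at hy
      exact (hb' y (mem_of_mem_head? hy)).trans (by omega)
    · rw [count_cons_of_ne ha] at h
      rw [ins, if_neg ha]
      refine isChain_cons.mpr ⟨fun y hy => ?_, ih cs h hb' hc'⟩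
      rw [head?_ins] at hy
      exact hrel y hy

theorem chain'_of_ins (k : ℕ) (γ cs : List ℕ) (h : cs.length = γ.count k)
    (hb : ∀ x ∈ γ, x ≤ k)
    (hc : Chain' (fun a b => b ≤ a + 1) (ins k γ cs)) :
    Chain' (fun a b => b ≤ a + 1) γ := by
  induction γ generalizing cs with
  | nil => exact isChain_nil
  | cons a rest ih =>
    have hb' : ∀ x ∈ rest, x ≤ k := fun x hx => hb x (mem_cons_of_mem _ hx)
    by_cases ha : a = k
    · subst ha
      rw [count_cons_self] at h
      rw [ins, if_pos rfl] at hc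
      have htail : Chain' (fun a b => b ≤ a + 1) (ins a rest cs.tail) :=
        (hc.tail).suffix (suffix_append _ _)
      refine isChain_cons.mpr ⟨fun y hy => ?_, ih cs.tail (by simp [h]) hb' htail⟩
      exact (hb' y (mem_of_mem_head? hy)).trans (by omega)
    · rw [count_cons_of_ne ha] at h
      rw [ins, if_neg ha] at hc
      obtain ⟨hrel, hc'⟩ := isChain_cons.mp hc
      refine isChain_cons.mpr ⟨fun y hy => hrel y (by rw [head?_ins]; exact hy), ih cs h hb' hc'⟩

theorem head?_dropWhile_false {α : Type*} (p : α → Bool) (l : List α) :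
    ∀ y ∈ (l.dropWhile p).head?, p y = false := by
  intro y hy
  have := head?_dropWhile_not p l
  rw [Option.mem_def] at hy
  rw [hy] at this
  exact this

theorem takeWhile_replicate_append (p : ℕ → Bool) (x : ℕ) (hp : p x = true) (c : ℕ)
    (l₂ : List ℕ) (h₂ : ∀ y ∈ l₂.head?, p y = false) :
    (List.replicate c x ++ l₂).takeWhile p = List.replicate c x := by
  induction c with
  | zero =>
    cases l₂ with
    | nil => simp
    | cons y l => simp [takeWhile_cons, h₂ y rfl]
  | succ c ih => simp [replicate_succ, takeWhile_cons, hp, ih]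

theorem dropWhile_replicate_append (p : ℕ → Bool) (x : ℕ) (hp : p x = true) (c : ℕ)
    (l₂ : List ℕ) (h₂ : ∀ y ∈ l₂.head?, p y = false) :
    (List.replicate c x ++ l₂).dropWhile p = l₂ := by
  induction c with
  | zero =>
    cases l₂ with
    | nil => simp
    | cons y l => simp [dropWhile_cons, h₂ y rfl]
  | succ c ih => simp [replicate_succ, dropWhile_cons, hp, ih]

theorem era_ins (k : ℕ) (γ cs : List ℕ) (h : cs.length = γ.count k)
    (hb : ∀ x ∈ γ, x ≤ k) : era k (ins k γ cs) = γ := by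
  induction γ generalizing cs with
  | nil => simp [ins, era]
  | cons a rest ih =>
    have ha1 : a ≤ k := hb a (mem_cons_self (a := a) (l := rest))
    have hb' : ∀ x ∈ rest, x ≤ k := fun x hx => hb x (mem_cons_of_mem _ hx)
    by_cases ha : a = k
    · subst ha
      rw [count_cons_self] at h
      rw [ins, if_pos rfl]
      have : era a (a :: (List.replicate cs.headI (a + 1) ++ ins a rest cs.tail))
          = a :: (era a (List.replicate cs.headI (a + 1)) ++ era a (ins a rest cs.tail)) := by
        simp [era, filter_append]
      rw [this, ih cs.tail (by simp [h]) hb']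
      simp [era]
    · rw [count_cons_of_ne ha] at h
      rw [ins, if_neg ha]
      have hane : (a != k + 1) = true := by simp; omega
      simp only [era, filter_cons, hane, if_pos]
      exact congrArg (a :: ·) (ih cs h hb')

theorem ext_ins (k : ℕ) (γ cs : List ℕ) (h : cs.length = γ.count k)
    (hb : ∀ x ∈ γ, x ≤ k) : ext k (ins k γ cs) = cs := by
  induction γ generalizing cs with
  | nil => simp at h; simp [ins, ext, h]
  | cons a rest ih =>
    have hb' : ∀ x ∈ rest, x ≤ k := fun x hx => hb x (mem_cons_of_mem _ hx)
    have hhead : ∀ y ∈ (ins k rest cs.tail).head?, (y == k + 1) = false := by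
      intro y hy
      rw [head?_ins] at hy
      have := hb' y (mem_of_mem_head? hy)
      simp; omega
    by_cases ha : a = k
    · subst ha
      rw [count_cons_self] at h
      cases cs with
      | nil => simp at h
      | cons c cs' =>
        simp only [length_cons] at h
        rw [ins, if_pos rfl, ext, if_pos rfl]
        rw [takeWhile_replicate_append _ _ (by simp) _ _ (by simpa using hhead),
          dropWhile_replicate_append _ _ (by simp) _ _ (by simpa using hhead)]
        simp [ih cs' (by omega) hb']
    · rw [count_cons_of_ne ha] at h
      rw [ins, if_neg ha, ext, if_neg ha]
      exact ih cs h hb'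

theorem length_ext (k : ℕ) (γ : List ℕ) : (ext k γ).length = γ.count k := by
  induction γ using ext.induct k with
  | case1 => simp [ext]
  | case2 rest ih =>
    rw [ext, if_pos rfl]
    have htw : count k (rest.takeWhile (· == k + 1)) = 0 := by
      rw [count_eq_zero]
      intro hmem
      have := mem_takeWhile_imp hmem
      simp at this
    conv_rhs => rw [← takeWhile_append_dropWhile (p := (· == k + 1)) (l := rest)]
    rw [count_cons_self, count_append, htw]
    simp [ih]
  | case3 a rest ha ih =>
    rw [ext, if_neg ha, count_cons_of_ne ha, ih]
theorem ins_era_ext (k : ℕ) (γ : List ℕ)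
    (hhead : ∀ y ∈ γ.head?, y ≠ k + 1)
    (hchain : Chain' (fun a b => b = k + 1 → a = k ∨ a = k + 1) γ) :
    ins k (era k γ) (ext k γ) = γ := by
  induction γ using ext.induct k with
  | case1 => rfl
  | case2 rest ih =>
    set tw := rest.takeWhile (· == k + 1) with htw
    set dw := rest.dropWhile (· == k + 1) with hdw
    have htwrep : tw = List.replicate tw.length (k + 1) :=
      eq_replicate_of_mem (fun b hb => by simpa using mem_takeWhile_imp hb)
    have heratw : era k tw = [] := by
      rw [htwrep]; simp [era]
    have hkne : (k != k + 1) = true := by simp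
    have hera : era k (k :: rest) = k :: era k dw := by
      conv_lhs => rw [← takeWhile_append_dropWhile (p := (· == k + 1)) (l := rest)]
      simp only [era, filter_cons, hkne, if_pos, filter_append]
      rw [show tw.filter (fun a => a != k + 1) = era k tw from rfl, heratw]
      simp
      rfl
    have hext : ext k (k :: rest) = tw.length :: ext k dw := by rw [ext, if_pos rfl]
    have hh : ∀ y ∈ dw.head?, y ≠ k + 1 := by
      intro y hy
      have := head?_dropWhile_false (· == k + 1) rest y hy
      simpa using this
    have hc : Chain' (fun a b => b = k + 1 → a = k ∨ a = k + 1) dw :=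
      hchain.suffix ((dropWhile_suffix _).trans (suffix_cons _ _))
    rw [hera, hext, ins, if_pos rfl]
    simp only [headI_cons, tail_cons]
    rw [ih hh hc, ← htwrep]
    rw [takeWhile_append_dropWhile]
  | case3 a rest ha ih =>
    have ha' : a ≠ k + 1 := hhead a rfl
    obtain ⟨hrel, hc'⟩ := isChain_cons.mp hchain
    have hhead' : ∀ y ∈ rest.head?, y ≠ k + 1 := by
      intro y hy hyk
      rcases hrel y hy hyk with h | h
      · exact ha h
      · exact ha' h
    have hane : (a != k + 1) = true := by simpa using ha'
    have hstep : era k (a :: rest) = a :: era k rest := by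
      simp [era, filter_cons, hane]
    rw [hstep, ext, if_neg ha, ins, if_neg ha, ih hhead' hc']


theorem ofFn_getD (K : ℕ) (cs : List ℕ) (h : cs.length = K) :
    List.ofFn (fun i : Fin K => cs.getD i 0) = cs := by
  apply List.ext_getElem
  · simp [h]
  · intro i h1 h2
    simp only [List.getElem_ofFn]
    exact (List.getD_eq_getElem cs 0 h2).symm ▸ rfl

def compEquivFun (K n : ℕ) :
    {cs : List ℕ // cs.length = K ∧ cs.sum = n} ≃ {f : Fin K → ℕ // ∑ i, f i = n} where
  toFun cs := ⟨fun i => cs.1.getD i 0, by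
    have h0 := ofFn_getD K cs.1 cs.2.1
    have h1 : (List.ofFn (fun i : Fin K => cs.1.getD i 0)).sum = cs.1.sum := by rw [h0]
    rw [List.sum_ofFn] at h1
    rw [h1, cs.2.2]⟩
  invFun f := ⟨List.ofFn f.1, by simp [List.sum_ofFn, f.2]⟩
  left_inv cs := Subtype.ext (ofFn_getD K cs.1 cs.2.1)
  right_inv f := Subtype.ext (by
    funext i
    show (List.ofFn f.1).getD (i : ℕ) 0 = f.1 i
    have hlt : (i : ℕ) < (List.ofFn f.1).length := by simp
    rw [List.getD_eq_getElem _ _ hlt]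
    simp)

def funEquivSym (K n : ℕ) :
    {f : Fin K → ℕ // ∑ i, f i = n} ≃ Sym (Fin K) n where
  toFun f := ⟨∑ i : Fin K, Multiset.replicate (f.1 i) i, by
    have hc : Multiset.card (∑ i : Fin K, Multiset.replicate (f.1 i) i)
        = ∑ i : Fin K, Multiset.card (Multiset.replicate (f.1 i) i) :=
      map_sum (⟨⟨Multiset.card, Multiset.card_zero⟩, Multiset.card_add⟩ : Multiset (Fin K) →+ ℕ)
        (fun i => Multiset.replicate (f.1 i) i) Finset.univ
    rw [hc]
    simp [f.2]⟩
  invFun s := ⟨fun i => s.1.count i, by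
    have h : ∑ i : Fin K, s.1.count i = Multiset.card s.1 := by
      rw [← Multiset.toFinset_sum_count_eq]
      symm
      apply Finset.sum_subset (Finset.subset_univ _)
      intro x _ hx
      rw [Multiset.mem_toFinset] at hx
      exact Multiset.count_eq_zero_of_notMem hx
    rw [h, s.2]⟩
  left_inv f := Subtype.ext (by
    funext j
    show Multiset.count j (∑ i : Fin K, Multiset.replicate (f.1 i) i) = f.1 j
    rw [Multiset.count_sum']
    simp [Multiset.count_replicate, Finset.sum_ite_eq])
  right_inv s := Subtype.ext (by
    have h := Multiset.toFinset_sum_count_nsmul_eq s.1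
    show ∑ i : Fin K, Multiset.replicate (Multiset.count i s.1) i = s.1
    have h2 : ∑ i : Fin K, Multiset.replicate (Multiset.count i s.1) i
        = ∑ a ∈ s.1.toFinset, Multiset.count a s.1 • ({a} : Multiset (Fin K)) := by
      rw [Finset.sum_congr rfl
        (fun x _ => (Multiset.nsmul_singleton x (Multiset.count x s.1)).symm)]
      symm
      apply Finset.sum_subset (Finset.subset_univ _)
      intro x _ hx
      rw [Multiset.mem_toFinset] at hx
      rw [Multiset.count_eq_zero_of_notMem hx, zero_nsmul]
    rw [h2, h])

theorem ncard_comps (K n : ℕ) (hK : 1 ≤ K) :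
    {cs : List ℕ | cs.length = K ∧ cs.sum = n}.ncard = (n + K - 1).choose (K - 1) := by
  have e := (compEquivFun K n).trans (funEquivSym K n)
  have h : {cs : List ℕ | cs.length = K ∧ cs.sum = n}.ncard = Nat.card (Sym (Fin K) n) := by
    rw [← Nat.card_coe_set_eq]
    exact Nat.card_congr e
  rw [h, Nat.card_eq_fintype_card, Sym.card_sym_eq_multichoose, Nat.multichoose_eq,
    Fintype.card_fin]
  have h1 : n + K - 1 = K + n - 1 := by omega
  have h2 : K - 1 = (K + n - 1) - n := by omega
  rw [h1, h2, Nat.choose_symm (by omega)]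


theorem chain'_imp_mem (L : ℕ) {γ : List ℕ} (h : Chain' (fun a b => b ≤ a + 1) γ)
    (hb : ∀ x ∈ γ, x ≤ L + 1) :
    Chain' (fun a b => b = L + 1 → a = L ∨ a = L + 1) γ := by
  induction γ with
  | nil => exact isChain_nil
  | cons a rest ih =>
    obtain ⟨h1, h2⟩ := isChain_cons.mp h
    refine isChain_cons.mpr ⟨?_, ih h2 (fun x hx => hb x (mem_cons_of_mem _ hx))⟩
    intro y hy hyeq
    have := h1 y hy
    have ha := hb a (mem_cons_self)
    omega

def PS (L : ℕ) (m : ℕ → ℕ) : Set (List ℕ) :=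
  {γ | γ.length = ∑ i ∈ Finset.range (L + 1), m i ∧ γ.head? = some 0 ∧
       List.Chain' (fun a b => b ≤ a + 1) γ ∧ (∀ x ∈ γ, x ≤ L) ∧
       ∀ i ≤ L, γ.count i = m i}

theorem key (m : ℕ → ℕ) : ∀ L, (∀ i ≤ L, 0 < m i) →
    (PS L m).ncard = ∏ i ∈ Finset.range L, ((m i + m (i + 1) - 1).choose (m i - 1)) := by
  intro L
  induction L with
  | zero =>
    intro hm
    have h0 := hm 0 le_rfl
    have hsingle : PS 0 m = {List.replicate (m 0) 0} := by
      ext γ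
      simp only [PS, Set.mem_setOf_eq, Set.mem_singleton_iff]
      constructor
      · rintro ⟨h1, h2, h3, h4, h5⟩
        have hall : ∀ b ∈ γ, b = 0 := fun b hb => Nat.le_zero.mp (h4 b hb)
        have := eq_replicate_of_mem hall
        rw [this, show γ.length = m 0 from by simpa using h1]
      · rintro rfl
        obtain ⟨n, hn⟩ : ∃ n, m 0 = n + 1 := ⟨m 0 - 1, by omega⟩
        refine ⟨by simp, by rw [hn]; rfl, isChain_replicate_of_rel _ (by omega), ?_, ?_⟩
        · intro x hx; rw [eq_of_mem_replicate hx]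
        · intro i hi
          rw [Nat.le_zero.mp hi, count_replicate_self]
    rw [hsingle, Set.ncard_singleton, Finset.prod_range_zero]
  | succ L ih =>
    intro hm
    have hmL : 0 < m L := hm L (by omega)
    have hm' : ∀ i ≤ L, 0 < m i := fun i hi => hm i (by omega)
    have himg : PS (L + 1) m = (fun p : List ℕ × List ℕ => ins L p.1 p.2) ''
        (PS L m ×ˢ {cs : List ℕ | cs.length = m L ∧ cs.sum = m (L + 1)}) := by
      apply Set.eq_of_subset_of_subset
      · rintro γ ⟨hlen, hhead, hchain, hbound, hcount⟩
        have hbound' : ∀ x ∈ era L γ, x ≤ L := by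
          intro x hx
          have hxg : x ∈ γ := mem_of_mem_filter hx
          have hxne : (x != L + 1) = true := of_mem_filter (p := fun a => a != L + 1) hx
          have := hbound x hxg
          simp only [bne_iff_ne, ne_eq] at hxne
          omega
        have hcount' : ∀ i ≤ L, (era L γ).count i = m i := by
          intro i hi
          have hne : (i != L + 1) = true := by simp; omega
          have : (era L γ).count i = γ.count i := count_filter hne
          rw [this]
          exact hcount i (by omega)
        have hlen' : (ext L γ).length = (era L γ).count L := by
          rw [length_ext, hcount L (by omega), hcount' L le_rfl]
        have hhQ : ∀ y ∈ γ.head?, y ≠ L + 1 := by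
          intro y hy
          rw [hhead] at hy
          simp only [Option.mem_def, Option.some_inj] at hy
          omega
        have hcQ := chain'_imp_mem L hchain hbound
        have hrt : ins L (era L γ) (ext L γ) = γ := ins_era_ext L γ hhQ hcQ
        have hsum : (ext L γ).sum = m (L + 1) := by
          have h1 := count_ins_top L (era L γ) (ext L γ) hlen' hbound'
          rw [hrt] at h1
          rw [← h1]
          exact hcount (L + 1) le_rfl
        have hlenγ' : (era L γ).length = ∑ i ∈ Finset.range (L + 1), m i := by
          have h2 := length_ins L (era L γ) (ext L γ) hlen'
          rw [hrt] at h2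
          rw [Finset.sum_range_succ] at hlen
          omega
        have hheadγ' : (era L γ).head? = some 0 := by
          cases γ with
          | nil => simp at hhead
          | cons a rest =>
            have ha0 : a = 0 := by simpa using hhead
            subst ha0
            have hne : ((0 : ℕ) != L + 1) = true := by simp
            show ((0 :: rest).filter (fun a => a != L + 1)).head? = some 0
            rw [filter_cons, if_pos hne]
            rfl
        have hchainγ' : Chain' (fun a b => b ≤ a + 1) (era L γ) :=
          chain'_of_ins L (era L γ) (ext L γ) hlen' hbound' (by rw [hrt]; exact hchain)
        refine ⟨(era L γ, ext L γ), ⟨⟨hlenγ', hheadγ', hchainγ', hbound', hcount'⟩, ?_, ?_⟩, hrt⟩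
        · rw [length_ext]; exact hcount L (by omega)
        · exact hsum
      · rintro γ ⟨⟨γ', cs⟩, ⟨⟨hlen', hhead', hchain', hbound', hcount'⟩, hcslen, hcssum⟩, rfl⟩
        dsimp only
        have hlencnt : cs.length = γ'.count L := by rw [hcslen, ← hcount' L le_rfl]
        refine ⟨?_, ?_, ?_, ?_, ?_⟩
        · rw [length_ins L γ' cs hlencnt, hlen', hcssum, Finset.sum_range_succ (f := m) (n := L + 1)]
        · rw [head?_ins, hhead']
        · exact chain'_ins L γ' cs hlencnt hbound' hchain'
        · intro x hx
          rcases mem_ins L γ' cs x hx with h | h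
          · exact (hbound' x h).trans (by omega)
          · omega
        · intro i hi
          rcases Nat.lt_or_ge i (L + 1) with h | h
          · rw [count_ins_of_ne L i (by omega) γ' cs hlencnt]
            exact hcount' i (by omega)
          · have hieq : i = L + 1 := by omega
            subst hieq
            rw [count_ins_top L γ' cs hlencnt hbound', hcssum]
    have hinj : Set.InjOn (fun p : List ℕ × List ℕ => ins L p.1 p.2)
        (PS L m ×ˢ {cs : List ℕ | cs.length = m L ∧ cs.sum = m (L + 1)}) := by
      rintro ⟨γ₁, c₁⟩ ⟨h1, hc1len, _⟩ ⟨γ₂, c₂⟩ ⟨h2, hc2len, _⟩ heq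
      simp only at heq
      have hb1 : ∀ x ∈ γ₁, x ≤ L := h1.2.2.2.1
      have hb2 : ∀ x ∈ γ₂, x ≤ L := h2.2.2.2.1
      have hl1 : c₁.length = γ₁.count L := by rw [hc1len, ← h1.2.2.2.2 L le_rfl]
      have hl2 : c₂.length = γ₂.count L := by rw [hc2len, ← h2.2.2.2.2 L le_rfl]
      have e1 : γ₁ = γ₂ := by
        rw [← era_ins L γ₁ c₁ hl1 hb1, ← era_ins L γ₂ c₂ hl2 hb2, heq]
      have e2 : c₁ = c₂ := by
        rw [← ext_ins L γ₁ c₁ hl1 hb1, ← ext_ins L γ₂ c₂ hl2 hb2, heq]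
      simp [Prod.ext_iff, e1, e2]
    rw [himg, Set.ncard_image_of_injOn hinj]
    have hprod : (PS L m ×ˢ {cs : List ℕ | cs.length = m L ∧ cs.sum = m (L + 1)}).ncard
        = (PS L m).ncard * {cs : List ℕ | cs.length = m L ∧ cs.sum = m (L + 1)}.ncard := by
      rw [← Nat.card_coe_set_eq, ← Nat.card_coe_set_eq, ← Nat.card_coe_set_eq]
      rw [Nat.card_congr (Equiv.Set.prod (PS L m) _), Nat.card_prod]
    rw [hprod, ih hm', ncard_comps (m L) (m (L + 1)) hmL, Finset.prod_range_succ]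
    congr 1
    congr 1
    omega

end PermittedAux

/-- A list `γ` of natural numbers is a *permitted sequence* of parameters
(`γ.length`, `t`) if its first entry is `0`, each entry exceeds the previous one by at
most `1`, and every entry is at most `t - 2`. -/
def PermittedSeq (t : ℕ) (γ : List ℕ) : Prop :=
  γ.head? = some 0 ∧ List.Chain' (fun a b => b ≤ a + 1) γ ∧ ∀ x ∈ γ, x ≤ t - 2

/-- For `t ≥ 2` and positive multiplicities `m 0, …, m (t-2)` summing to `m`, the number
of permitted sequences of parameters `(m, t)` in which the value `i` appears exactly
`m i` times for each `0 ≤ i ≤ t-2` equals `∏_{i=0}^{t-3} C(m i + m (i+1) - 1, m i - 1)`. -/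
theorem card_permitted_seqs_with_multiplicities (t : ℕ) (ht : 2 ≤ t)
    (m : ℕ → ℕ) (hm : ∀ i, i + 2 ≤ t → 0 < m i) :
    {γ : List ℕ | γ.length = ∑ i ∈ Finset.range (t - 1), m i ∧ PermittedSeq t γ ∧
        ∀ i, i + 2 ≤ t → γ.count i = m i}.ncard
      = ∏ i ∈ Finset.range (t - 2), Nat.choose (m i + m (i + 1) - 1) (m i - 1) := by
  obtain ⟨L, rfl⟩ : ∃ L, t = L + 2 := ⟨t - 2, by omega⟩
  have hset : {γ : List ℕ | γ.length = ∑ i ∈ Finset.range (L + 2 - 1), m i ∧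
      PermittedSeq (L + 2) γ ∧ ∀ i, i + 2 ≤ L + 2 → γ.count i = m i} = PermittedAux.PS L m := by
    ext γ
    simp only [PermittedAux.PS, PermittedSeq, Set.mem_setOf_eq,
      show L + 2 - 2 = L from rfl, show L + 2 - 1 = L + 1 from rfl]
    constructor
    · rintro ⟨h1, ⟨h2, h3, h4⟩, h5⟩
      exact ⟨h1, h2, h3, h4, fun i hi => h5 i (by omega)⟩
    · rintro ⟨h1, h2, h3, h4, h5⟩
      exact ⟨h1, ⟨h2, h3, h4⟩, fun i hi => h5 i (by omega)⟩
  rw [hset, PermittedAux.key m L (fun i hi => hm i (by omega))]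
  rfl
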